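/- (At-the-money Edgeworth price.) For all reals ν, B, μ3, μ4, ν·B·∫_0^∞ z·g₂(z) dz = (1/√(2π))·ν·B·(1 − (μ4 − 3 − μ3²)/24). -/

import Mathlib

open MeasureTheory Real Set

/-- The standard normal density `φ(z) = (2π)^(−1/2) exp(−z²/2)`. -/
noncomputable def φ (z : ℝ) : ℝ := (Real.sqrt (2 * Real.pi))⁻¹ * Real.exp (-z ^ 2 / 2)

/-- The Hermite polynomials defined by `H n z * φ z = φ⁽ⁿ⁾ z`. -/
noncomputable def H (n : ℕ) (z : ℝ) : ℝ := iteratedDeriv n φ z / φ z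

/-- The fourth-order Gram–Charlier density with skewness `μ3` and kurtosis `μ4`. -/
noncomputable def g₁ (μ3 μ4 z : ℝ) : ℝ :=
  φ z * (1 - μ3 / 6 * H 3 z + (μ4 - 3) / 24 * H 4 z)

/-- The fourth-order Edgeworth density with skewness `μ3` and kurtosis `μ4`. -/
noncomputable def g₂ (μ3 μ4 z : ℝ) : ℝ :=
  g₁ μ3 μ4 z + φ z * (μ3 ^ 2 / 72) * H 6 z

lemma phi_pos (z : ℝ) : 0 < φ z := by
  unfold φ
  exact mul_pos (inv_pos.mpr (Real.sqrt_pos.mpr (by positivity))) (Real.exp_pos _)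

lemma hasDerivAt_phi (z : ℝ) : HasDerivAt φ (-z * φ z) z := by
  have h1 : HasDerivAt (fun z : ℝ => -z ^ 2 / 2) (-z) z := by
    have := ((hasDerivAt_pow 2 z).neg).div_const 2
    refine this.congr_deriv ?_
    push_cast; ring
  have h2 := (h1.exp).const_mul (Real.sqrt (2 * Real.pi))⁻¹
  unfold φ
  refine h2.congr_deriv ?_
  ring

lemma deriv_P_mul_phi (P P' : ℝ → ℝ) (hP : ∀ z, HasDerivAt P (P' z) z)
    (Q : ℝ → ℝ) (hQ : ∀ z, P' z - z * P z = Q z) :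
    deriv (fun z => P z * φ z) = fun z => Q z * φ z := by
  funext z
  show deriv (P * φ) z = _
  rw [((hP z).mul (hasDerivAt_phi z)).deriv, ← hQ z]
  ring

lemma itd1 : iteratedDeriv 1 φ = fun z => (-z) * φ z := by
  rw [iteratedDeriv_one]
  funext z
  exact (hasDerivAt_phi z).deriv

lemma itd2 : iteratedDeriv 2 φ = fun z => (z ^ 2 - 1) * φ z := by
  rw [iteratedDeriv_succ, itd1]
  exact deriv_P_mul_phi (fun z => -z) (fun _ => -1)
    (fun z => (hasDerivAt_id z).neg) _ (fun z => by ring)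

lemma itd3 : iteratedDeriv 3 φ = fun z => (3 * z - z ^ 3) * φ z := by
  rw [iteratedDeriv_succ, itd2]
  refine deriv_P_mul_phi (fun z => z ^ 2 - 1) (fun z => 2 * z)
    (fun z => ?_) _ (fun z => by ring)
  have := (hasDerivAt_pow 2 z).sub_const 1
  refine this.congr_deriv ?_
  push_cast; ring

lemma itd4 : iteratedDeriv 4 φ = fun z => (z ^ 4 - 6 * z ^ 2 + 3) * φ z := by
  rw [iteratedDeriv_succ, itd3]
  refine deriv_P_mul_phi (fun z => 3 * z - z ^ 3) (fun z => 3 - 3 * z ^ 2)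
    (fun z => ?_) _ (fun z => by ring)
  have := ((hasDerivAt_id z).const_mul 3).sub (hasDerivAt_pow 3 z)
  refine this.congr_deriv ?_
  push_cast; ring

lemma itd5 : iteratedDeriv 5 φ = fun z => (10 * z ^ 3 - z ^ 5 - 15 * z) * φ z := by
  rw [iteratedDeriv_succ, itd4]
  refine deriv_P_mul_phi (fun z => z ^ 4 - 6 * z ^ 2 + 3)
    (fun z => 4 * z ^ 3 - 12 * z) (fun z => ?_) _ (fun z => by ring)
  have := (((hasDerivAt_pow 4 z).sub ((hasDerivAt_pow 2 z).const_mul 6)).add_const 3)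
  refine this.congr_deriv ?_
  push_cast; ring

lemma itd6 : iteratedDeriv 6 φ = fun z => (z ^ 6 - 15 * z ^ 4 + 45 * z ^ 2 - 15) * φ z := by
  rw [iteratedDeriv_succ, itd5]
  refine deriv_P_mul_phi (fun z => 10 * z ^ 3 - z ^ 5 - 15 * z)
    (fun z => 30 * z ^ 2 - 5 * z ^ 4 - 15) (fun z => ?_) _ (fun z => by ring)
  have := (((hasDerivAt_pow 3 z).const_mul 10).sub (hasDerivAt_pow 5 z)).sub
    ((hasDerivAt_id z).const_mul 15)
  refine this.congr_deriv ?_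
  push_cast; ring

lemma H3_eq (z : ℝ) : H 3 z = 3 * z - z ^ 3 := by
  unfold H
  rw [itd3]
  field_simp [(phi_pos z).ne']

lemma H4_eq (z : ℝ) : H 4 z = z ^ 4 - 6 * z ^ 2 + 3 := by
  unfold H
  rw [itd4]
  field_simp [(phi_pos z).ne']

lemma H6_eq (z : ℝ) : H 6 z = z ^ 6 - 15 * z ^ 4 + 45 * z ^ 2 - 15 := by
  unfold H
  rw [itd6]
  field_simp [(phi_pos z).ne']

lemma integrable_pow_mul_gauss (k : ℕ) :
    Integrable (fun z : ℝ => z ^ k * Real.exp (-z ^ 2 / 2)) := by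
  have h := integrable_rpow_mul_exp_neg_mul_sq (b := 1/2) (by norm_num)
    (s := (k : ℝ)) (lt_of_lt_of_le (by norm_num) (Nat.cast_nonneg k))
  refine h.congr ?_
  filter_upwards with x
  rw [Real.rpow_natCast]
  ring_nf

lemma tendsto_pow_mul_gauss (k : ℕ) :
    Filter.Tendsto (fun z : ℝ => z ^ k * Real.exp (-z ^ 2 / 2)) Filter.atTop (nhds 0) := by
  have h := (rpow_mul_exp_neg_mul_sq_isLittleO_exp_neg (b := 1/2) one_half_pos
    (k : ℝ)).tendsto_zero_of_tendsto
    (Real.tendsto_exp_atBot.comp (Filter.tendsto_id.const_mul_atTop_of_neg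
      (neg_lt_zero.mpr one_half_pos)))
  refine h.congr' ?_
  filter_upwards [Filter.eventually_gt_atTop (0 : ℝ)] with x hx
  rw [Real.rpow_natCast]
  ring_nf

/-- At-the-money Edgeworth price. -/
theorem edgeworth_atm_price (ν B μ3 μ4 : ℝ) :
    ν * B * (∫ z in Set.Ioi (0 : ℝ), z * g₂ μ3 μ4 z) =
      1 / Real.sqrt (2 * Real.pi) * ν * B * (1 - (μ4 - 3 - μ3 ^ 2) / 24) := by
  set c : ℝ := (Real.sqrt (2 * Real.pi))⁻¹ with hc
  set k : ℝ := (μ4 - 3) / 24 with hk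
  set m : ℝ := μ3 ^ 2 / 72 with hm
  -- the antiderivative F z = S z * φ z
  set S : ℝ → ℝ := fun z => (-1 + k - 3 * m) + (2 * k - 9 * m) * z ^ 2 - μ3 / 6 * z ^ 3
    + (-k + 9 * m) * z ^ 4 - m * z ^ 6 with hS
  set S' : ℝ → ℝ := fun z => 2 * (2 * k - 9 * m) * z - μ3 / 2 * z ^ 2
    + 4 * (-k + 9 * m) * z ^ 3 - 6 * m * z ^ 5 with hS'
  have hSd : ∀ z : ℝ, HasDerivAt S (S' z) z := by
    intro z
    have h := (((((hasDerivAt_pow 2 z).const_mul (2 * k - 9 * m)).const_add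
      (-1 + k - 3 * m)).sub ((hasDerivAt_pow 3 z).const_mul (μ3 / 6))).add
      ((hasDerivAt_pow 4 z).const_mul (-k + 9 * m))).sub
      ((hasDerivAt_pow 6 z).const_mul m)
    refine h.congr_deriv ?_
    simp only [hS']
    push_cast; ring
  have hFd : ∀ z : ℝ, HasDerivAt (fun z => S z * φ z) (z * g₂ μ3 μ4 z) z := by
    intro z
    have h := (hSd z).mul (hasDerivAt_phi z)
    refine h.congr_deriv ?_
    unfold g₂ g₁
    rw [H3_eq, H4_eq, H6_eq]
    simp only [hS, hS', hk, hm]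
    ring
  have hint : IntegrableOn (fun z : ℝ => z * g₂ μ3 μ4 z) (Set.Ioi 0) := by
    have heq : (fun z : ℝ => z * g₂ μ3 μ4 z)
        = fun z => (c * (1 + 3 * k - 15 * m)) * (z ^ 1 * Real.exp (-z ^ 2 / 2))
          + (-(c * μ3 / 2)) * (z ^ 2 * Real.exp (-z ^ 2 / 2))
          + (c * (-6 * k + 45 * m)) * (z ^ 3 * Real.exp (-z ^ 2 / 2))
          + (c * μ3 / 6) * (z ^ 4 * Real.exp (-z ^ 2 / 2))
          + (c * (k - 15 * m)) * (z ^ 5 * Real.exp (-z ^ 2 / 2))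
          + (c * m) * (z ^ 7 * Real.exp (-z ^ 2 / 2)) := by
      funext z
      unfold g₂ g₁ φ
      rw [H3_eq, H4_eq, H6_eq]
      simp only [hk, hm, hc]
      ring
    rw [heq]
    exact ((((((integrable_pow_mul_gauss 1).const_mul _).add
      ((integrable_pow_mul_gauss 2).const_mul _)).add
      ((integrable_pow_mul_gauss 3).const_mul _)).add
      ((integrable_pow_mul_gauss 4).const_mul _)).add
      ((integrable_pow_mul_gauss 5).const_mul _)).add
      ((integrable_pow_mul_gauss 7).const_mul _) |>.integrableOn
  have htend : Filter.Tendsto (fun z => S z * φ z) Filter.atTop (nhds 0) := by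
    have heq : (fun z : ℝ => S z * φ z)
        = fun z => (c * (-1 + k - 3 * m)) * (z ^ 0 * Real.exp (-z ^ 2 / 2))
          + (c * (2 * k - 9 * m)) * (z ^ 2 * Real.exp (-z ^ 2 / 2))
          + (-(c * μ3 / 6)) * (z ^ 3 * Real.exp (-z ^ 2 / 2))
          + (c * (-k + 9 * m)) * (z ^ 4 * Real.exp (-z ^ 2 / 2))
          + (-(c * m)) * (z ^ 6 * Real.exp (-z ^ 2 / 2)) := by
      funext z
      unfold φ
      simp only [hS, hc]
      ring
    rw [heq]
    have h := (((((tendsto_pow_mul_gauss 0).const_mul (c * (-1 + k - 3 * m))).add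
      ((tendsto_pow_mul_gauss 2).const_mul (c * (2 * k - 9 * m)))).add
      ((tendsto_pow_mul_gauss 3).const_mul (-(c * μ3 / 6)))).add
      ((tendsto_pow_mul_gauss 4).const_mul (c * (-k + 9 * m)))).add
      ((tendsto_pow_mul_gauss 6).const_mul (-(c * m)))
    simpa using h
  have key := integral_Ioi_of_hasDerivAt_of_tendsto' (fun x _ => hFd x) hint htend
  rw [key]
  have hφ0 : φ 0 = c := by
    unfold φ
    rw [show (-(0:ℝ) ^ 2 / 2) = 0 by norm_num, Real.exp_zero, mul_one, hc]
  simp only [hS, hφ0]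
  rw [one_div, ← hc, hk, hm]
  ring
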